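/- Let V be a finite-dimensional vector space over a field F, and let τ, g be automorphisms of V such that g τ g^{-1} = τ^m for some integer m ≥ 2. If τ has only finitely many eigenvalues (in an algebraic closure of F) and all eigenvalues of τ are nonzero, then every eigenvalue of τ is a root of unity. -/

import Mathlib

open scoped TensorProduct

private lemma coe_pow_aux {F V : Type*} [Field F] [AddCommGroup V] [Module F V]
    (τ : V ≃ₗ[F] V) (m : ℕ) :
    ((τ ^ m : V ≃ₗ[F] V) : V →ₗ[F] V) = ((τ : V →ₗ[F] V)) ^ m := by
  induction m with
  | zero => rfl
  | succ n ih => rw [pow_succ, pow_succ, ← ih]; rfl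

theorem stmt4 (F : Type*) [Field F] (V : Type*) [AddCommGroup V] [Module F V]
    [FiniteDimensional F V] (τ g : V ≃ₗ[F] V) (m : ℕ) (hm : 2 ≤ m)
    (hconj : g * τ * g⁻¹ = τ ^ m)
    (hfin : {μ : AlgebraicClosure F |
      Module.End.HasEigenvalue (LinearMap.baseChange (AlgebraicClosure F)
        (τ : V →ₗ[F] V)) μ}.Finite)
    (hne : ∀ μ : AlgebraicClosure F,
      Module.End.HasEigenvalue (LinearMap.baseChange (AlgebraicClosure F)
        (τ : V →ₗ[F] V)) μ → μ ≠ 0) :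
    ∀ μ : AlgebraicClosure F,
      Module.End.HasEigenvalue (LinearMap.baseChange (AlgebraicClosure F)
        (τ : V →ₗ[F] V)) μ → ∃ k : ℕ, 0 < k ∧ μ ^ k = 1 := by
  set A := AlgebraicClosure F
  set T : Module.End A (A ⊗[F] V) := LinearMap.baseChange A (τ : V →ₗ[F] V) with hT
  -- the key step: eigenvalues are stable under μ ↦ μ ^ m
  have key : ∀ μ : A, Module.End.HasEigenvalue T μ →
      Module.End.HasEigenvalue T (μ ^ m) := by
    intro μ hμ
    obtain ⟨v, hvm, hv0⟩ := hμ.exists_hasEigenvector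
    rw [Module.End.mem_genEigenspace_one] at hvm
    -- τ * g⁻¹ = g⁻¹ * τ ^ m
    have hrel : (τ * g⁻¹ : V ≃ₗ[F] V) = g⁻¹ * τ ^ m := by
      rw [← hconj]; group
    have hrel' : ((τ : V →ₗ[F] V) ∘ₗ (g⁻¹ : V ≃ₗ[F] V))
        = ((g⁻¹ : V ≃ₗ[F] V) : V →ₗ[F] V) ∘ₗ ((τ : V →ₗ[F] V) ^ m) := by
      have := congrArg (fun e : V ≃ₗ[F] V => (e : V →ₗ[F] V)) hrel
      rw [← coe_pow_aux]
      exact this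
    set G' : (A ⊗[F] V) →ₗ[A] (A ⊗[F] V) :=
      LinearMap.baseChange A ((g⁻¹ : V ≃ₗ[F] V) : V →ₗ[F] V) with hG'
    have hcomm : T ∘ₗ G' = G' ∘ₗ T ^ m := by
      rw [hT, hG', ← LinearMap.baseChange_comp, hrel', LinearMap.baseChange_comp,
        LinearMap.baseChange_pow]
    have hGv0 : G' v ≠ 0 := by
      intro h
      have : LinearMap.baseChange A ((g : V ≃ₗ[F] V) : V →ₗ[F] V) (G' v) = 0 := by
        rw [h]; simp
      rw [hG', ← LinearMap.comp_apply, ← LinearMap.baseChange_comp] at this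
      have hgg : ((g : V ≃ₗ[F] V) : V →ₗ[F] V) ∘ₗ ((g⁻¹ : V ≃ₗ[F] V) : V →ₗ[F] V)
          = LinearMap.id := by
        ext x
        show g (g⁻¹ x) = x
        exact g.apply_symm_apply x
      rw [hgg, LinearMap.baseChange_id] at this
      exact hv0 (by simpa using this)
    have hTm : ∀ n : ℕ, (T ^ n) v = (μ ^ n) • v := by
      intro n
      induction n with
      | zero => simp
      | succ n ih =>
        rw [pow_succ, Module.End.mul_apply, hvm, map_smul, ih, smul_smul, pow_succ, mul_comm]
    refine Module.End.hasEigenvalue_of_hasEigenvector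
      (x := G' v) ⟨Module.End.mem_genEigenspace_one.mpr ?_, hGv0⟩
    have := congrArg (fun f : Module.End A (A ⊗[F] V) => f v) hcomm
    simp only [LinearMap.comp_apply] at this
    rw [this, hTm m, map_smul]
  intro μ hμ
  -- all iterates μ ^ (m ^ j) are eigenvalues
  have hiter : ∀ j : ℕ, Module.End.HasEigenvalue T (μ ^ (m ^ j)) := by
    intro j
    induction j with
    | zero => simpa using hμ
    | succ n ih =>
      have := key _ ih
      rwa [← pow_mul, ← pow_succ] at this
  have hμ0 : μ ≠ 0 := hne μ hμ
  obtain ⟨i, -, j, -, hij, heq⟩ :=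
    Set.infinite_univ.exists_ne_map_eq_of_mapsTo
      (f := fun j : ℕ => μ ^ (m ^ j)) (fun j _ => hiter j) hfin
  wlog hlt : i < j generalizing i j
  · exact this j i hij.symm heq.symm (by omega)
  refine ⟨m ^ j - m ^ i, ?_, ?_⟩
  · have : m ^ i < m ^ j := Nat.pow_lt_pow_right (by omega) hlt
    omega
  · have hpow : m ^ i ≤ m ^ j := Nat.pow_le_pow_right (by omega) hlt.le
    have : μ ^ (m ^ i) * μ ^ (m ^ j - m ^ i) = μ ^ (m ^ i) * 1 := by
      rw [mul_one, ← pow_add]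
      rw [Nat.add_sub_cancel' hpow]
      exact heq.symm
    exact mul_left_cancel₀ (pow_ne_zero _ hμ0) this
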